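/- Let h₁(z,t) = 4z/(T−t) and h₂(z,t) = 2z/(T−t)² + z/(T−t)⁴ for t ∈ [0,T). Then for any t₀ ∈ [0,T) and x₀ ∈ ℝ², the function x(t) = M(T−t)M(T−t₀)⁻¹x₀, with M(τ) = [[τ³ sin(1/τ), τ³ cos(1/τ)], [τ² sin(1/τ) + τ cos(1/τ), τ² cos(1/τ) − τ sin(1/τ)]], satisfies ẋ₁ = −h₁(x₁,t) + x₂ and ẋ₂ = −h₂(x₁,t) on [t₀,T), and x(t) → 0 as t → T. -/

import Mathlib

open Matrix Real Set Filter Topology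

noncomputable def M (τ : ℝ) : Matrix (Fin 2) (Fin 2) ℝ :=
  !![τ^3 * Real.sin (1/τ), τ^3 * Real.cos (1/τ);
     τ^2 * Real.sin (1/τ) + τ * Real.cos (1/τ), τ^2 * Real.cos (1/τ) - τ * Real.sin (1/τ)]

noncomputable def h₁ (T z t : ℝ) : ℝ := 4 * z / (T - t)

noncomputable def h₂ (T z t : ℝ) : ℝ := 2 * z / (T - t)^2 + z / (T - t)^4

theorem stmt_16 (T t₀ : ℝ) (hT : 0 < T) (ht₀ : t₀ ∈ Set.Ico (0:ℝ) T)
    (x₀ : Fin 2 → ℝ) (x : ℝ → Fin 2 → ℝ)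
    (hx : ∀ t, x t = (M (T - t) * (M (T - t₀))⁻¹) *ᵥ x₀) :
    (∀ t ∈ Set.Ico t₀ T,
      HasDerivAt (fun s => x s 0) (-(h₁ T (x t 0) t) + x t 1) t ∧
      HasDerivAt (fun s => x s 1) (-(h₂ T (x t 0) t)) t) ∧
    Tendsto x (nhdsWithin T (Set.Iio T)) (nhds 0) := by
  set c : Fin 2 → ℝ := (M (T - t₀))⁻¹ *ᵥ x₀ with hc
  have hx0 : ∀ s, x s 0 = (T-s)^3 * Real.sin ((T-s)⁻¹) * c 0
      + (T-s)^3 * Real.cos ((T-s)⁻¹) * c 1 := by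
    intro s
    rw [hx, ← Matrix.mulVec_mulVec]
    simp [M, Matrix.mulVec, dotProduct, Fin.sum_univ_two, one_div, hc]
  have hx1 : ∀ s, x s 1 = ((T-s)^2 * Real.sin ((T-s)⁻¹) + (T-s) * Real.cos ((T-s)⁻¹)) * c 0
      + ((T-s)^2 * Real.cos ((T-s)⁻¹) - (T-s) * Real.sin ((T-s)⁻¹)) * c 1 := by
    intro s
    rw [hx, ← Matrix.mulVec_mulVec]
    simp [M, Matrix.mulVec, dotProduct, Fin.sum_univ_two, one_div, hc]
  constructor
  · intro t ht
    obtain ⟨ht1, ht2⟩ := ht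
    have hτ : 0 < T - t := by linarith
    have hne : T - t ≠ 0 := ne_of_gt hτ
    have hu : HasDerivAt (fun s : ℝ => T - s) (-1) t := by
      simpa using (hasDerivAt_id t).const_sub T
    have hinv : HasDerivAt (fun s : ℝ => (T - s)⁻¹) (-(-1) / (T-t)^2) t := hu.inv hne
    have hsin : HasDerivAt (fun s : ℝ => Real.sin ((T-s)⁻¹))
        (Real.cos ((T-t)⁻¹) * (-(-1) / (T-t)^2)) t := hinv.sin
    have hcos : HasDerivAt (fun s : ℝ => Real.cos ((T-s)⁻¹))
        (-Real.sin ((T-t)⁻¹) * (-(-1) / (T-t)^2)) t := hinv.cos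
    have hp3 : HasDerivAt (fun s : ℝ => (T - s)^3) (3 * (T-t)^2 * (-1)) t := by
      simpa using hu.fun_pow 3
    have hp2 : HasDerivAt (fun s : ℝ => (T - s)^2) (2 * (T-t)^1 * (-1)) t := by
      simpa using hu.fun_pow 2
    constructor
    · have key := (((hp3.mul hsin).mul_const (c 0)).add ((hp3.mul hcos).mul_const (c 1)))
      have heq : (fun s => x s 0) = fun s => (T-s)^3 * Real.sin ((T-s)⁻¹) * c 0
          + (T-s)^3 * Real.cos ((T-s)⁻¹) * c 1 := funext hx0
      rw [heq]
      convert key using 1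
      rfl
      rfl
      rfl
      rw [h₁, hx0 t, hx1 t]
      field_simp
      ring
    · have key := ((((hp2.mul hsin).add (hu.mul hcos)).mul_const (c 0)).add
        (((hp2.mul hcos).sub (hu.mul hsin)).mul_const (c 1)))
      have heq : (fun s => x s 1) = fun s =>
          ((T-s)^2 * Real.sin ((T-s)⁻¹) + (T-s) * Real.cos ((T-s)⁻¹)) * c 0
          + ((T-s)^2 * Real.cos ((T-s)⁻¹) - (T-s) * Real.sin ((T-s)⁻¹)) * c 1 := funext hx1
      rw [heq]
      convert key using 1
      rfl
      rfl
      rfl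
      rw [h₂, hx0 t]
      field_simp
      ring
  · rw [tendsto_pi_nhds]
    intro i
    have hev : ∀ᶠ t in 𝓝[<] T, 0 < T - t := by
      filter_upwards [self_mem_nhdsWithin] with t ht
      exact sub_pos.mpr ht
    fin_cases i
    · apply squeeze_zero_norm' (a := fun t => (T-t)^3 * (|c 0| + |c 1|))
      · filter_upwards [hev] with t ht
        show ‖x t 0‖ ≤ (T-t)^3 * (|c 0| + |c 1|)
        rw [hx0 t]
        calc ‖(T-t)^3 * Real.sin ((T-t)⁻¹) * c 0 + (T-t)^3 * Real.cos ((T-t)⁻¹) * c 1‖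
            ≤ ‖(T-t)^3 * Real.sin ((T-t)⁻¹) * c 0‖ + ‖(T-t)^3 * Real.cos ((T-t)⁻¹) * c 1‖ :=
              norm_add_le _ _
          _ ≤ (T-t)^3 * (|c 0| + |c 1|) := by
              rw [Real.norm_eq_abs, Real.norm_eq_abs, abs_mul, abs_mul, abs_mul, abs_mul]
              have h1 := Real.abs_sin_le_one ((T-t)⁻¹)
              have h2 := Real.abs_cos_le_one ((T-t)⁻¹)
              have h3 : |(T-t)^3| = (T-t)^3 := abs_of_pos (by positivity)
              rw [h3]
              have e1 : (T-t)^3 * |Real.sin ((T-t)⁻¹)| * |c 0| ≤ (T-t)^3 * |c 0| :=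
                mul_le_mul_of_nonneg_right
                  (mul_le_of_le_one_right (pow_pos ht 3).le h1) (abs_nonneg _)
              have e2 : (T-t)^3 * |Real.cos ((T-t)⁻¹)| * |c 1| ≤ (T-t)^3 * |c 1| :=
                mul_le_mul_of_nonneg_right
                  (mul_le_of_le_one_right (pow_pos ht 3).le h2) (abs_nonneg _)
              nlinarith [e1, e2]
      · have : Tendsto (fun t : ℝ => (T-t)^3 * (|c 0| + |c 1|)) (𝓝 T)
            (𝓝 ((T-T)^3 * (|c 0| + |c 1|))) := by
          exact (((continuous_const.sub continuous_id).pow 3).mul continuous_const).tendsto T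
        simpa using this.mono_left nhdsWithin_le_nhds
    · apply squeeze_zero_norm' (a := fun t => ((T-t)^2 + (T-t)) * (|c 0| + |c 1|))
      · filter_upwards [hev] with t ht
        show ‖x t 1‖ ≤ ((T-t)^2 + (T-t)) * (|c 0| + |c 1|)
        rw [hx1 t]
        set τ := T - t
        set s1 := Real.sin τ⁻¹
        set c1 := Real.cos τ⁻¹
        have h1 := Real.abs_sin_le_one τ⁻¹
        have h2 := Real.abs_cos_le_one τ⁻¹
        calc ‖(τ^2 * s1 + τ * c1) * c 0 + (τ^2 * c1 - τ * s1) * c 1‖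
            ≤ ‖(τ^2 * s1 + τ * c1) * c 0‖ + ‖(τ^2 * c1 - τ * s1) * c 1‖ := norm_add_le _ _
          _ ≤ (τ^2 + τ) * |c 0| + (τ^2 + τ) * |c 1| := by
              rw [Real.norm_eq_abs, Real.norm_eq_abs, abs_mul, abs_mul]
              have ha : |τ^2 * s1 + τ * c1| ≤ τ^2 + τ := by
                calc |τ^2 * s1 + τ * c1| ≤ |τ^2 * s1| + |τ * c1| := abs_add_le _ _
                  _ ≤ τ^2 + τ := by
                    rw [abs_mul, abs_mul, abs_of_pos (pow_pos ht 2), abs_of_pos ht]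
                    nlinarith [abs_nonneg s1, abs_nonneg c1, pow_pos ht 2]
              have hb : |τ^2 * c1 - τ * s1| ≤ τ^2 + τ := by
                calc |τ^2 * c1 - τ * s1| ≤ |τ^2 * c1| + |τ * s1| := abs_sub _ _
                  _ ≤ τ^2 + τ := by
                    rw [abs_mul, abs_mul, abs_of_pos (pow_pos ht 2), abs_of_pos ht]
                    nlinarith [abs_nonneg s1, abs_nonneg c1, pow_pos ht 2]
              nlinarith [abs_nonneg (c 0), abs_nonneg (c 1),
                abs_nonneg (τ^2 * s1 + τ * c1), abs_nonneg (τ^2 * c1 - τ * s1),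
                pow_pos ht 2]
          _ = ((T-t)^2 + (T-t)) * (|c 0| + |c 1|) := by ring
      · have : Tendsto (fun t : ℝ => ((T-t)^2 + (T-t)) * (|c 0| + |c 1|)) (𝓝 T)
            (𝓝 (((T-T)^2 + (T-T)) * (|c 0| + |c 1|))) := by
          exact ((((continuous_const.sub continuous_id).pow 2).add
            (continuous_const.sub continuous_id)).mul continuous_const).tendsto T
        simpa using this.mono_left nhdsWithin_le_nhds
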